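/- Let u : ℝ² → ℝ² be C², globally Lipschitz, with divergence ∇·u, and let x̄ : ℝ → ℝ² solve x̄′(p) = u(x̄(p)) with u(x̄(p)) ≠ 0 for every p. Fix p^u < p^d, set a = x̄(p^u), b = x̄(p^d), and suppose there is δ > 0 such that w(x,t) = 0 for all t whenever |x − x̄(p)| < δ for some p ≤ p^u or some p ≥ p^d. For fixed p ∈ (p^u, p^d) and t ∈ ℝ, define the gate flux φ_ε(p,t) := ⟨x_ε^u(p,t) − x_ε^d(p,t), n̂(p)⟩ · ∫_0^1 ⟨u(γ_ε(s)) + ε w(γ_ε(s), t), û(p)⟩ ds, where γ_ε(s) = x_ε^d(p,t) + s(x_ε^u(p,t) − x_ε^d(p,t)) and û(p) = u(x̄(p))/|u(x̄(p))|. Then there exist C > 0 and ε₀ > 0 such that for all t ∈ ℝ and all ε ∈ (0, ε₀], |φ_ε(p,t) − M_ε(p,t)| ≤ C ε², where M_ε(p,t) := ε ∫_{p^u}^{p^d} exp(∫_τ^p (∇·u)(x̄(ξ)) dξ) ⟨J u(x̄(τ)), w(x̄(τ), τ + t − p)⟩ dτ. -/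

import Mathlib

open scoped InnerProductSpace NNReal

noncomputable section

/-- The plane with its Euclidean inner product. -/
abbrev E2 : Type := EuclideanSpace ℝ (Fin 2)

/-- Rotation by +π/2 : J(x₁,x₂) = (−x₂, x₁). -/
noncomputable def Jrot : E2 → E2 :=
  fun x => (WithLp.equiv 2 (Fin 2 → ℝ)).symm ![-(x 1), x 0]

/-- Divergence of a planar vector field, as the trace of its Fréchet derivative. -/
noncomputable def div2 (u : E2 → E2) (x : E2) : ℝ :=
  LinearMap.trace ℝ E2 (fderiv ℝ u x).toLinearMap

/-- The leading-order instantaneous flux (Melnikov) function across the gate at `x̄(p)`. -/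
noncomputable def Mflux (u : E2 → E2) (xbar : ℝ → E2) (w : E2 → ℝ → E2)
    (pu pd ε p t : ℝ) : ℝ :=
  ε * ∫ τ in pu..pd,
    Real.exp (∫ ξ in τ..p, div2 u (xbar ξ)) *
      ⟪Jrot (u (xbar τ)), w (xbar τ) (τ + t - p)⟫_ℝ

/-- The gate flux across the straight segment from the downstream point `xd` to the
upstream point `xu`: the signed gate length in the direction `n̂(p)` times the average,
along the segment, of the component of the full velocity field in the direction `û(p)`. -/
noncomputable def gateFlux (u : E2 → E2) (w : E2 → ℝ → E2) (xbar : ℝ → E2)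
    (ε p t : ℝ) (xu xd : E2) : ℝ :=
  ⟪xu - xd, (‖u (xbar p)‖)⁻¹ • Jrot (u (xbar p))⟫_ℝ *
    ∫ s in (0:ℝ)..1,
      ⟪u (xd + s • (xu - xd)) + ε • w (xd + s • (xu - xd)) t,
        (‖u (xbar p)‖)⁻¹ • u (xbar p)⟫_ℝ

/-! ### Auxiliary algebra for the rotation `Jrot` -/

lemma Jrot_apply0 (x : E2) : Jrot x 0 = -(x 1) := rfl
lemma Jrot_apply1 (x : E2) : Jrot x 1 = x 0 := rfl

lemma inner_E2 (x y : E2) : ⟪x, y⟫_ℝ = x 0 * y 0 + x 1 * y 1 := by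
  simp [PiLp.inner_apply, Fin.sum_univ_two]; ring

set_option linter.unnecessarySeqFocus false in
/-- `Jrot` as a continuous linear map. -/
noncomputable def JL : E2 →L[ℝ] E2 :=
  LinearMap.toContinuousLinearMap
    { toFun := Jrot
      map_add' := by
        intro x y; ext i; fin_cases i <;>
          simp [Jrot_apply0, Jrot_apply1, PiLp.add_apply] <;> ring
      map_smul' := by
        intro c x; ext i; fin_cases i <;>
          simp [Jrot_apply0, Jrot_apply1, PiLp.smul_apply, smul_eq_mul, mul_comm] }

lemma JL_eq (x : E2) : JL x = Jrot x := rfl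

def e0 : E2 := EuclideanSpace.single 0 1
def e1 : E2 := EuclideanSpace.single 1 1

lemma E2_decomp (x : E2) : x = x 0 • e0 + x 1 • e1 := by
  ext i; fin_cases i <;>
    simp [e0, e1, EuclideanSpace.single_apply, PiLp.add_apply, PiLp.smul_apply]

lemma trace_eq (A : E2 →L[ℝ] E2) :
    LinearMap.trace ℝ E2 A.toLinearMap = A e0 0 + A e1 1 := by
  rw [LinearMap.trace_eq_matrix_trace ℝ (EuclideanSpace.basisFun (Fin 2) ℝ).toBasis]
  simp [Matrix.trace, Fin.sum_univ_two, LinearMap.toMatrix_apply,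
    EuclideanSpace.basisFun_apply, e0, e1]

lemma apply_decomp (A : E2 →L[ℝ] E2) (x : E2) (i : Fin 2) :
    A x i = x 0 * A e0 i + x 1 * A e1 i := by
  conv_lhs => rw [E2_decomp x]
  simp [PiLp.add_apply, PiLp.smul_apply, smul_eq_mul]

/-- The planar trace identity: `⟪J(Av), y⟫ + ⟪Jv, Ay⟫ = (tr A)⟪Jv, y⟫`. -/
lemma J_identity (A : E2 →L[ℝ] E2) (v y : E2) :
    ⟪Jrot (A v), y⟫_ℝ + ⟪Jrot v, A y⟫_ℝ
      = (LinearMap.trace ℝ E2 A.toLinearMap) * ⟪Jrot v, y⟫_ℝ := by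
  rw [trace_eq, inner_E2, inner_E2, inner_E2, Jrot_apply0, Jrot_apply1,
    Jrot_apply0, Jrot_apply1, apply_decomp A v 0, apply_decomp A v 1,
    apply_decomp A y 0, apply_decomp A y 1]
  ring

lemma norm_Jrot (x : E2) : ‖Jrot x‖ = ‖x‖ := by
  have h : ⟪Jrot x, Jrot x⟫_ℝ = ⟪x, x⟫_ℝ := by
    rw [inner_E2, inner_E2, Jrot_apply0, Jrot_apply1]; ring
  have h2 := congrArg Real.sqrt h
  rwa [real_inner_self_eq_norm_sq, real_inner_self_eq_norm_sq,
    Real.sqrt_sq (norm_nonneg _), Real.sqrt_sq (norm_nonneg _)] at h2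

lemma abs_coord_le (y : E2) (i : Fin 2) : |y i| ≤ ‖y‖ := by
  have h : y i = ⟪EuclideanSpace.single i (1:ℝ), y⟫_ℝ := by
    fin_cases i <;>
      simp [PiLp.inner_apply, EuclideanSpace.single_apply, Fin.sum_univ_two]
  rw [h]
  calc |⟪EuclideanSpace.single i (1:ℝ), y⟫_ℝ| ≤ ‖EuclideanSpace.single i (1:ℝ)‖ * ‖y‖ :=
        abs_real_inner_le_norm _ _
    _ = ‖y‖ := by rw [EuclideanSpace.norm_single]; simp

/-- The divergence is bounded by twice the Lipschitz constant. -/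
lemma abs_div2_le (u : E2 → E2) (K : ℝ≥0) (huLip : LipschitzWith K u) (x : E2) :
    |div2 u x| ≤ 2 * K := by
  have hA : ‖fderiv ℝ u x‖ ≤ K := norm_fderiv_le_of_lipschitz ℝ huLip
  have h0 : |(fderiv ℝ u x) e0 0| ≤ K := by
    refine (abs_coord_le _ _).trans ?_
    calc ‖(fderiv ℝ u x) e0‖ ≤ ‖fderiv ℝ u x‖ * ‖e0‖ := (fderiv ℝ u x).le_opNorm e0
      _ ≤ K * 1 := by
          refine mul_le_mul hA ?_ (norm_nonneg _) (by positivity)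
          simp [e0, EuclideanSpace.norm_single]
      _ = K := mul_one _
  have h1 : |(fderiv ℝ u x) e1 1| ≤ K := by
    refine (abs_coord_le _ _).trans ?_
    calc ‖(fderiv ℝ u x) e1‖ ≤ ‖fderiv ℝ u x‖ * ‖e1‖ := (fderiv ℝ u x).le_opNorm e1
      _ ≤ K * 1 := by
          refine mul_le_mul hA ?_ (norm_nonneg _) (by positivity)
          simp [e1, EuclideanSpace.norm_single]
      _ = K := mul_one _
  rw [div2, trace_eq]
  calc |(fderiv ℝ u x) e0 0 + (fderiv ℝ u x) e1 1|
      ≤ |(fderiv ℝ u x) e0 0| + |(fderiv ℝ u x) e1 1| := abs_add_le _ _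
    _ ≤ K + K := add_le_add h0 h1
    _ = 2 * K := by ring

/-! ### Grönwall bound estimates -/

lemma exp_sub_one_le_mul_exp {y : ℝ} : 0 ≤ y → Real.exp y - 1 ≤ y * Real.exp y := by
  intro _
  have h := Real.add_one_le_exp (-y)
  rw [Real.exp_neg] at h
  have hE := Real.exp_pos y
  have h2 : (-y + 1) * Real.exp y ≤ (Real.exp y)⁻¹ * Real.exp y :=
    mul_le_mul_of_nonneg_right h (le_of_lt hE)
  rw [inv_mul_cancel₀ (ne_of_gt hE)] at h2
  nlinarith

lemma gronwallBound_le {K ε d x : ℝ} (hK : 0 ≤ K) (hε : 0 ≤ ε) (hx : 0 ≤ x) (hxd : x ≤ d) :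
    gronwallBound 0 K ε x ≤ ε * (d * Real.exp (K * d)) := by
  have hd : 0 ≤ d := hx.trans hxd
  rcases eq_or_ne K 0 with h0 | h0
  · rw [h0, gronwallBound_K0]
    simp only [zero_add, h0, zero_mul, Real.exp_zero, mul_one]
    nlinarith
  · rw [gronwallBound_of_K_ne_0 h0]
    simp only [zero_mul, zero_add]
    have hKpos : 0 < K := lt_of_le_of_ne hK (Ne.symm h0)
    have h1 : Real.exp (K * x) - 1 ≤ (K * x) * Real.exp (K * x) :=
      exp_sub_one_le_mul_exp (by positivity)
    have h2 : (K * x) * Real.exp (K * x) ≤ (K * d) * Real.exp (K * d) :=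
      mul_le_mul (mul_le_mul_of_nonneg_left hxd hK)
        (Real.exp_le_exp.2 (mul_le_mul_of_nonneg_left hxd hK))
        (le_of_lt (Real.exp_pos _)) (by positivity)
    calc ε / K * (Real.exp (K * x) - 1) ≤ ε / K * ((K * d) * Real.exp (K * d)) := by
          apply mul_le_mul_of_nonneg_left (h1.trans h2) (by positivity)
      _ = ε * (d * Real.exp (K * d)) := by field_simp

/-- Distance between an approximate and an exact solution of `x' = v x`. -/
lemma dist_traj {v : E2 → E2} {K : ℝ≥0} (hLip : LipschitzWith K v)
    {f g f' : ℝ → E2} {a b εf : ℝ}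
    (hf : ∀ s, HasDerivAt f (f' s) s)
    (hfb : ∀ s, dist (f' s) (v (f s)) ≤ εf)
    (hg : ∀ s, HasDerivAt g (v (g s)) s)
    (h0 : f a = g a) :
    ∀ s ∈ Set.Icc a b, dist (f s) (g s) ≤ gronwallBound 0 K (εf + 0) (s - a) :=
  dist_le_of_approx_trajectories_ODE (v := fun _ x => v x) (fun _ => hLip)
    (fun s _ => (hf s).continuousAt.continuousWithinAt)
    (fun s _ => (hf s).hasDerivWithinAt)
    (fun s _ => hfb s)
    (fun s _ => (hg s).continuousAt.continuousWithinAt)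
    (fun s _ => (hg s).hasDerivWithinAt)
    (fun s _ => by simp)
    (by simp [h0])

lemma norm_sub_le_of_mem_segment' {x y z : E2} (hz : z ∈ segment ℝ y x) :
    ‖z - y‖ ≤ ‖x - y‖ := by
  obtain ⟨a, b, ha, hb, hab, rfl⟩ := hz
  have h1 : a • y + b • x - y = b • (x - y) := by
    have : a = 1 - b := by linarith
    rw [this, smul_sub, sub_smul, one_smul]; abel
  rw [h1, norm_smul, Real.norm_eq_abs, abs_of_nonneg hb]
  have hb1 : b ≤ 1 := by linarith
  nlinarith [norm_nonneg (x - y)]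

set_option maxHeartbeats 4000000 in
/-- **Instantaneous transport theorem.**  For a steady C² globally Lipschitz planar
field `u` with a nonvanishing streakline `x̄`, and a bounded C¹ agitation `w` vanishing
near the streakline upstream of `a = x̄(pu)` and downstream of `b = x̄(pd)`, the
instantaneous flux `φ_ε(p,t)` across the gate of the pseudo-streakline, drawn at
`x̄(p)` with `pu < p < pd`, equals the Melnikov function `M_ε(p,t)` up to an error of
order `ε²`, uniformly in `t`. -/
theorem instantaneous_transport
    (u : E2 → E2) (hu : ContDiff ℝ 2 u)
    (K : ℝ≥0) (huLip : LipschitzWith K u)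
    (xbar : ℝ → E2) (hxbar : ∀ p : ℝ, HasDerivAt xbar (u (xbar p)) p)
    (hune : ∀ p : ℝ, u (xbar p) ≠ 0)
    (pu pd : ℝ) (hpp : pu < pd)
    (w : E2 → ℝ → E2) (hw : ContDiff ℝ 1 (Function.uncurry w))
    (Cw : ℝ) (hwbdd : ∀ (x : E2) (t : ℝ), ‖w x t‖ ≤ Cw)
    (Kw : ℝ≥0) (hwLip : ∀ t : ℝ, LipschitzWith Kw (fun x => w x t))
    (δ : ℝ) (hδ : 0 < δ)
    (hopen : ∀ (x : E2) (t : ℝ),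
      (∃ p : ℝ, (p ≤ pu ∨ pd ≤ p) ∧ ‖x - xbar p‖ < δ) → w x t = 0)
    (p : ℝ) (hp : p ∈ Set.Ioo pu pd) :
    ∃ C > (0:ℝ), ∃ ε₀ > (0:ℝ),
      ∀ t : ℝ, ∀ ε ∈ Set.Ioc (0:ℝ) ε₀,
        ∀ X Y : ℝ → E2,
          (∀ s : ℝ, HasDerivAt X (u (X s) + ε • w (X s) s) s) →
          X (t - p + pu) = xbar pu →
          (∀ s : ℝ, HasDerivAt Y (u (Y s) + ε • w (Y s) s) s) →
          Y (t - p + pd) = xbar pd →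
          |gateFlux u w xbar ε p t (X t) (Y t)
            - Mflux u xbar w pu pd ε p t| ≤ C * ε ^ 2 := by
  obtain ⟨hpu, hpd⟩ := hp
  set dd : ℝ := pd - pu with hdd_def
  have hdd : 0 < dd := by rw [hdd_def]; linarith
  have hCw0 : 0 ≤ Cw := le_trans (norm_nonneg _) (hwbdd 0 0)
  have hu_cont : Continuous u := hu.continuous
  have hud : Differentiable ℝ u := hu.differentiable (by norm_num)
  have hfd : ContDiff ℝ 1 (fderiv ℝ u) := hu.fderiv_right (by norm_num)
  have hfd_cont : Continuous (fderiv ℝ u) := hfd.continuous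
  have hfd2_cont : Continuous (fderiv ℝ (fderiv ℝ u)) := hfd.continuous_fderiv (by norm_num)
  have hw_cont : Continuous (Function.uncurry w) := hw.continuous
  have hxc : Continuous xbar := by
    rw [continuous_iff_continuousAt]; exact fun q => (hxbar q).continuousAt
  have hdivc : Continuous fun x : E2 => div2 u x := by
    have h0 : Continuous fun x : E2 => (fderiv ℝ u x) e0 :=
      ((ContinuousLinearMap.apply ℝ E2 e0).continuous).comp hfd_cont
    have h1 : Continuous fun x : E2 => (fderiv ℝ u x) e1 :=
      ((ContinuousLinearMap.apply ℝ E2 e1).continuous).comp hfd_cont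
    have heq : (fun x : E2 => div2 u x)
        = fun x => (fderiv ℝ u x) e0 0 + (fderiv ℝ u x) e1 1 := by
      funext x; rw [div2, trace_eq]
    rw [heq]
    exact ((EuclideanSpace.proj (0 : Fin 2)).continuous.comp h0).add
      ((EuclideanSpace.proj (1 : Fin 2)).continuous.comp h1)
  -- bounds on the compact piece of streakline
  obtain ⟨Bu, hBu⟩ : ∃ B : ℝ, ∀ q ∈ Set.Icc pu pd, ‖u (xbar q)‖ ≤ B :=
    (isCompact_Icc (a := pu) (b := pd)).exists_bound_of_continuousOn
      ((hu_cont.comp hxc).continuousOn)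
  have hBu0 : 0 ≤ Bu := le_trans (norm_nonneg _) (hBu pu ⟨le_rfl, le_of_lt hpp⟩)
  obtain ⟨RS, hRS⟩ : ∃ R : ℝ, ∀ q ∈ Set.Icc pu pd, ‖xbar q - xbar p‖ ≤ R :=
    (isCompact_Icc (a := pu) (b := pd)).exists_bound_of_continuousOn
      ((hxc.sub continuous_const).continuousOn)
  have hRS0 : 0 ≤ RS := le_trans (norm_nonneg _) (hRS pu ⟨le_rfl, le_of_lt hpp⟩)
  set D : Set E2 := Metric.closedBall (xbar p) (RS + 1) with hD_def
  have hDconv : Convex ℝ D := convex_closedBall _ _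
  have hDcomp : IsCompact D := isCompact_closedBall _ _
  obtain ⟨L, hL⟩ : ∃ L : ℝ, ∀ x ∈ D, ‖fderiv ℝ (fderiv ℝ u) x‖ ≤ L :=
    hDcomp.exists_bound_of_continuousOn (f := fderiv ℝ (fderiv ℝ u)) hfd2_cont.continuousOn
  have hL0 : 0 ≤ L := le_trans (norm_nonneg (fderiv ℝ (fderiv ℝ u) (xbar p)))
    (hL (xbar p) (by rw [hD_def]; simp [Metric.mem_closedBall]; positivity))
  -- Taylor estimate on D
  have taylor : ∀ x ∈ D, ∀ y ∈ D,
      ‖u x - u y - (fderiv ℝ u y) (x - y)‖ ≤ L * ‖x - y‖ ^ 2 := by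
    intro x hx y hy
    have hseg : segment ℝ y x ⊆ D := hDconv.segment_subset hy hx
    have lipD : ∀ z ∈ segment ℝ y x, ‖fderiv ℝ u z - fderiv ℝ u y‖ ≤ L * ‖x - y‖ := by
      intro z hz
      have h2 := hDconv.norm_image_sub_le_of_norm_fderiv_le
        (f := fderiv ℝ u) (fun z _ => (hfd.differentiable (by norm_num)) z) hL hy (hseg hz)
      exact h2.trans (mul_le_mul_of_nonneg_left (norm_sub_le_of_mem_segment' hz) hL0)
    have key := (convex_segment y x).norm_image_sub_le_of_norm_fderiv_le'
      (f := u) (φ := fderiv ℝ u y) (C := L * ‖x - y‖)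
      (fun z _ => hud z) (fun z hz => lipD z hz)
      (left_mem_segment ℝ y x) (right_mem_segment ℝ y x)
    calc ‖u x - u y - (fderiv ℝ u y) (x - y)‖ ≤ (L * ‖x - y‖) * ‖x - y‖ := key
      _ = L * ‖x - y‖ ^ 2 := by ring
  -- constants
  set C1 : ℝ := Cw * (dd * Real.exp (K * dd)) with hC1_def
  have hC10 : 0 ≤ C1 := by positivity
  set eB : ℝ := Real.exp (2 * K * dd) with heB_def
  have heB1 : (1:ℝ) ≤ eB := by rw [heB_def]; apply Real.one_le_exp; positivity
  have heB0 : (0:ℝ) ≤ eB := by linarith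
  set C5 : ℝ := eB * (Bu * (L * C1 ^ 2 + Kw * C1)) with hC5_def
  have hC50 : 0 ≤ C5 := by positivity
  set C6 : ℝ := K * C1 + Cw with hC6_def
  have hC60 : 0 ≤ C6 := by positivity
  set C7 : ℝ := eB * (C5 * dd) with hC7_def
  have hC70 : 0 ≤ C7 := by positivity
  refine ⟨2 * C1 * C6 + C7 + 1, by positivity, min 1 (1 / (C1 + 1)), by positivity, ?_⟩
  intro t ε hε X Y hX hX0 hY hY0
  obtain ⟨hε0, hεle⟩ := hε
  have hε1 : ε ≤ 1 := le_trans hεle (min_le_left _ _)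
  have hεC1 : ε * C1 ≤ 1 := by
    have h2 : ε ≤ 1 / (C1 + 1) := le_trans hεle (min_le_right _ _)
    have h3 : ε * (C1 + 1) ≤ 1 := by
      rw [le_div_iff₀ (by positivity)] at h2; exact h2
    nlinarith
  set σ : ℝ := t - p with hσ_def
  -- shifted trajectories
  set Xt : ℝ → E2 := fun q => X (q + σ) with hXt_def
  set Yt : ℝ → E2 := fun q => Y (q + σ) with hYt_def
  have hXt' : ∀ q, HasDerivAt Xt (u (Xt q) + ε • w (Xt q) (q + σ)) q := by
    intro q
    have h := (hX (q + σ)).scomp q ((hasDerivAt_id q).add_const σ)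
    simpa [hXt_def, Function.comp_def] using h
  have hYt' : ∀ q, HasDerivAt Yt (u (Yt q) + ε • w (Yt q) (q + σ)) q := by
    intro q
    have h := (hY (q + σ)).scomp q ((hasDerivAt_id q).add_const σ)
    simpa [hYt_def, Function.comp_def] using h
  have hX0' : Xt pu = xbar pu := by
    rw [hXt_def]
    show X (pu + σ) = xbar pu
    rw [hσ_def, show pu + (t - p) = t - p + pu from add_comm _ _]; exact hX0
  have hY0' : Yt pd = xbar pd := by
    rw [hYt_def]
    show Y (pd + σ) = xbar pd
    rw [hσ_def, show pd + (t - p) = t - p + pd from add_comm _ _]; exact hY0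
  -- Gronwall: upstream trajectory stays ε-close to the streakline
  have hwXb : ∀ (x : E2) (τ : ℝ), dist (u x + ε • w x τ) (u x) ≤ ε * Cw := by
    intro x τ
    rw [dist_eq_norm, add_sub_cancel_left, norm_smul, Real.norm_eq_abs, abs_of_pos hε0]
    exact mul_le_mul_of_nonneg_left (hwbdd _ _) (le_of_lt hε0)
  have hρX : ∀ q ∈ Set.Icc pu p, ‖Xt q - xbar q‖ ≤ ε * C1 := by
    intro q hq
    have h := dist_traj huLip (f := Xt) (g := xbar)
      (f' := fun s => u (Xt s) + ε • w (Xt s) (s + σ)) (a := pu) (b := p)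
      hXt' (fun s => hwXb (Xt s) (s + σ)) hxbar hX0' q hq
    rw [dist_eq_norm] at h
    refine h.trans ?_
    have h4 := gronwallBound_le (K := (K:ℝ)) (ε := ε * Cw + 0) (d := dd) (x := q - pu)
      K.coe_nonneg (by positivity) (by linarith [hq.1]) (by rw [hdd_def]; linarith [hq.2])
    refine h4.trans (le_of_eq ?_)
    rw [hC1_def]; ring
  -- Gronwall: downstream trajectory, backwards in time
  have negLip : LipschitzWith K (fun x : E2 => -(u x)) := fun x y => by
    simpa [edist_neg_neg] using huLip x y
  have hρY : ∀ q ∈ Set.Icc p pd, ‖Yt q - xbar q‖ ≤ ε * C1 := by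
    intro q hq
    have hZ' : ∀ r, HasDerivAt (fun r => Yt (pd + p - r))
        (-(u (Yt (pd + p - r)) + ε • w (Yt (pd + p - r)) ((pd + p - r) + σ))) r := by
      intro r
      have hs : HasDerivAt (fun r : ℝ => pd + p - r) (-1) r :=
        (hasDerivAt_id r).const_sub (pd + p)
      have h : HasDerivAt (fun r => Yt (pd + p - r))
          ((-1 : ℝ) • (u (Yt (pd + p - r)) + ε • w (Yt (pd + p - r)) ((pd + p - r) + σ))) r :=
        (hYt' (pd + p - r)).scomp r hs
      rwa [neg_one_smul] at h
    have hζ' : ∀ r, HasDerivAt (fun r => xbar (pd + p - r))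
        (-(u (xbar (pd + p - r)))) r := by
      intro r
      have hs : HasDerivAt (fun r : ℝ => pd + p - r) (-1) r :=
        (hasDerivAt_id r).const_sub (pd + p)
      have h : HasDerivAt (fun r => xbar (pd + p - r))
          ((-1 : ℝ) • u (xbar (pd + p - r))) r := (hxbar (pd + p - r)).scomp r hs
      rwa [neg_one_smul] at h
    have h0 : (fun r => Yt (pd + p - r)) p = (fun r => xbar (pd + p - r)) p := by
      simp only [add_sub_cancel_right]; exact hY0'
    have hb : ∀ s : ℝ, dist (-(u (Yt (pd + p - s)) + ε • w (Yt (pd + p - s)) ((pd + p - s) + σ)))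
        ((fun x : E2 => -(u x)) ((fun r => Yt (pd + p - r)) s)) ≤ ε * Cw := by
      intro s
      simp only []
      rw [dist_neg_neg]
      exact hwXb _ _
    have h := dist_traj negLip
      (f := fun r => Yt (pd + p - r)) (g := fun r => xbar (pd + p - r))
      (f' := fun r => -(u (Yt (pd + p - r)) + ε • w (Yt (pd + p - r)) ((pd + p - r) + σ)))
      (a := p) (b := pd) hZ' hb hζ' h0 (pd + p - q) ⟨by linarith [hq.2], by linarith [hq.1]⟩
    have hqq : pd + p - (pd + p - q) = q := by ring
    simp only [hqq] at h
    rw [dist_eq_norm] at h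
    refine h.trans ?_
    have h4 := gronwallBound_le (K := (K:ℝ)) (ε := ε * Cw + 0) (d := dd)
      (x := pd + p - q - p) K.coe_nonneg (by positivity) (by linarith [hq.2])
      (by rw [hdd_def]; linarith [hq.1])
    refine h4.trans (le_of_eq ?_)
    rw [hC1_def]; ring
  -- membership in the compact convex set D
  have hmemD : ∀ q ∈ Set.Icc pu pd, xbar q ∈ D := by
    intro q hq
    rw [hD_def, Metric.mem_closedBall, dist_eq_norm]
    linarith [hRS q hq]
  have hclose_mem : ∀ z : E2, ∀ q ∈ Set.Icc pu pd, ‖z - xbar q‖ ≤ ε * C1 → z ∈ D := by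
    intro z q hq hz
    rw [hD_def, Metric.mem_closedBall, dist_eq_norm]
    calc ‖z - xbar p‖ ≤ ‖z - xbar q‖ + ‖xbar q - xbar p‖ := by
          rw [show z - xbar p = (z - xbar q) + (xbar q - xbar p) by abel]
          exact norm_add_le _ _
      _ ≤ ε * C1 + RS := add_le_add hz (hRS q hq)
      _ ≤ RS + 1 := by linarith [hεC1]
  have hXD : ∀ q ∈ Set.Icc pu p, Xt q ∈ D := fun q hq =>
    hclose_mem _ q ⟨hq.1, le_trans hq.2 (le_of_lt hpd)⟩ (hρX q hq)
  have hYD : ∀ q ∈ Set.Icc p pd, Yt q ∈ D := fun q hq =>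
    hclose_mem _ q ⟨le_trans (le_of_lt hpu) hq.1, hq.2⟩ (hρY q hq)
  -- the integrating factor
  have hdivx : Continuous fun q : ℝ => div2 u (xbar q) := hdivc.comp hxc
  set β : ℝ → ℝ := fun q => ∫ ξ in pu..q, div2 u (xbar ξ) with hβ_def
  have hβ' : ∀ q, HasDerivAt β (div2 u (xbar q)) q := fun q =>
    intervalIntegral.integral_hasDerivAt_right (hdivx.intervalIntegrable _ _)
      (hdivx.stronglyMeasurableAtFilter _ _) hdivx.continuousAt
  have hβc : Continuous β := by
    rw [continuous_iff_continuousAt]; exact fun q => (hβ' q).continuousAt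
  have hβbd : ∀ q ∈ Set.Icc pu pd, |β q| ≤ 2 * K * dd := by
    intro q hq
    have h1 := intervalIntegral.norm_integral_le_of_norm_le_const (C := 2 * K)
      (f := fun ξ => div2 u (xbar ξ)) (a := pu) (b := q)
      (fun x _ => by simpa [Real.norm_eq_abs] using abs_div2_le u K huLip (xbar x))
    rw [Real.norm_eq_abs] at h1
    refine h1.trans ?_
    have h2 : |q - pu| ≤ dd := by
      rw [abs_le, hdd_def]; constructor <;> linarith [hq.1, hq.2]
    nlinarith [K.coe_nonneg]
  have hexpβ : ∀ q ∈ Set.Icc pu pd, Real.exp (-β q) ≤ eB ∧ Real.exp (β q) ≤ eB := by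
    intro q hq
    have h := hβbd q hq
    rw [heB_def]
    constructor <;> apply Real.exp_le_exp.2 <;> cases' abs_le.1 h with h1 h2 <;> linarith
  -- the rotated velocity along the streakline
  set vJ : ℝ → E2 := fun q => JL (u (xbar q)) with hvJ_def
  have hvJ' : ∀ q, HasDerivAt vJ (JL ((fderiv ℝ u (xbar q)) (u (xbar q)))) q := fun q =>
    JL.hasFDerivAt.comp_hasDerivAt q
      (((hud (xbar q)).hasFDerivAt).comp_hasDerivAt q (hxbar q))
  have hvJc : Continuous vJ := JL.continuous.comp (hu_cont.comp hxc)
  have hvJnorm : ∀ q, ‖vJ q‖ = ‖u (xbar q)‖ := fun q => norm_Jrot _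
  -- the Melnikov integrand
  set G : ℝ → ℝ := fun τ => Real.exp (-β τ) * ⟪vJ τ, w (xbar τ) (τ + σ)⟫_ℝ with hG_def
  have hwcurve : Continuous fun τ : ℝ => w (xbar τ) (τ + σ) :=
    hw_cont.comp (hxc.prodMk (continuous_id.add continuous_const))
  have hGc : Continuous G :=
    (Real.continuous_exp.comp hβc.neg).mul (hvJc.inner hwcurve)
  set W : ℝ → ℝ := fun q => ∫ τ in pu..q, G τ with hW_def
  have hW' : ∀ q, HasDerivAt W (G q) q := fun q =>
    intervalIntegral.integral_hasDerivAt_right (hGc.intervalIntegrable _ _)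
      (hGc.stronglyMeasurableAtFilter _ _) hGc.continuousAt
  -- the Melnikov scalar functions and their ODEs
  set hXf : ℝ → ℝ := fun q => ⟪vJ q, Xt q - xbar q⟫_ℝ with hXf_def
  set hYf : ℝ → ℝ := fun q => ⟪vJ q, Yt q - xbar q⟫_ℝ with hYf_def
  set RX : ℝ → E2 := fun q =>
    (u (Xt q) - u (xbar q) - (fderiv ℝ u (xbar q)) (Xt q - xbar q))
      + ε • (w (Xt q) (q + σ) - w (xbar q) (q + σ)) with hRX_def
  set RY : ℝ → E2 := fun q =>
    (u (Yt q) - u (xbar q) - (fderiv ℝ u (xbar q)) (Yt q - xbar q))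
      + ε • (w (Yt q) (q + σ) - w (xbar q) (q + σ)) with hRY_def
  set gX : ℝ → ℝ := fun q => Real.exp (-β q) * hXf q - ε * W q with hgX_def
  set gY : ℝ → ℝ := fun q => Real.exp (-β q) * hYf q - ε * W q with hgY_def
  have hXf' : ∀ q, HasDerivAt hXf
      (⟪vJ q, (u (Xt q) + ε • w (Xt q) (q + σ)) - u (xbar q)⟫_ℝ
        + ⟪JL ((fderiv ℝ u (xbar q)) (u (xbar q))), Xt q - xbar q⟫_ℝ) q := fun q =>
    HasDerivAt.inner ℝ (hvJ' q) ((hXt' q).sub (hxbar q))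
  have hYf' : ∀ q, HasDerivAt hYf
      (⟪vJ q, (u (Yt q) + ε • w (Yt q) (q + σ)) - u (xbar q)⟫_ℝ
        + ⟪JL ((fderiv ℝ u (xbar q)) (u (xbar q))), Yt q - xbar q⟫_ℝ) q := fun q =>
    HasDerivAt.inner ℝ (hvJ' q) ((hYt' q).sub (hxbar q))
  have hgX' : ∀ q, HasDerivAt gX (Real.exp (-β q) * ⟪vJ q, RX q⟫_ℝ) q := by
    intro q
    have he : HasDerivAt (fun q => Real.exp (-β q))
        (Real.exp (-β q) * -(div2 u (xbar q))) q := by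
      have := ((hβ' q).neg).exp
      simpa using this
    have hprod := (he.mul (hXf' q)).sub ((hW' q).const_mul ε)
    refine hprod.congr_deriv (Eq.symm ?_)
    have hkey : ⟪JL ((fderiv ℝ u (xbar q)) (u (xbar q))), Xt q - xbar q⟫_ℝ
        + ⟪JL (u (xbar q)), (fderiv ℝ u (xbar q)) (Xt q - xbar q)⟫_ℝ
        = div2 u (xbar q) * ⟪JL (u (xbar q)), Xt q - xbar q⟫_ℝ :=
      J_identity (fderiv ℝ u (xbar q)) (u (xbar q)) (Xt q - xbar q)
    simp only [inner_sub_right] at hkey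
    simp only [hRX_def, hG_def, hXf_def, hvJ_def, inner_add_right, inner_sub_right,
      real_inner_smul_right]
    linear_combination (-Real.exp (-β q)) * hkey
  have hgY' : ∀ q, HasDerivAt gY (Real.exp (-β q) * ⟪vJ q, RY q⟫_ℝ) q := by
    intro q
    have he : HasDerivAt (fun q => Real.exp (-β q))
        (Real.exp (-β q) * -(div2 u (xbar q))) q := by
      have := ((hβ' q).neg).exp
      simpa using this
    have hprod := (he.mul (hYf' q)).sub ((hW' q).const_mul ε)
    refine hprod.congr_deriv (Eq.symm ?_)
    have hkey : ⟪JL ((fderiv ℝ u (xbar q)) (u (xbar q))), Yt q - xbar q⟫_ℝ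
        + ⟪JL (u (xbar q)), (fderiv ℝ u (xbar q)) (Yt q - xbar q)⟫_ℝ
        = div2 u (xbar q) * ⟪JL (u (xbar q)), Yt q - xbar q⟫_ℝ :=
      J_identity (fderiv ℝ u (xbar q)) (u (xbar q)) (Yt q - xbar q)
    simp only [inner_sub_right] at hkey
    simp only [hRY_def, hG_def, hYf_def, hvJ_def, inner_add_right, inner_sub_right,
      real_inner_smul_right]
    linear_combination (-Real.exp (-β q)) * hkey
  -- bound on the derivative of gX, gY
  have hRbound : ∀ q, ∀ Zq : E2, q ∈ Set.Icc pu pd → Zq ∈ D → ‖Zq - xbar q‖ ≤ ε * C1 →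
      |Real.exp (-β q) * ⟪vJ q, (u Zq - u (xbar q) - (fderiv ℝ u (xbar q)) (Zq - xbar q))
        + ε • (w Zq (q + σ) - w (xbar q) (q + σ))⟫_ℝ| ≤ C5 * ε ^ 2 := by
    intro q Zq hq hZD hρ
    have hr1 : ‖u Zq - u (xbar q) - (fderiv ℝ u (xbar q)) (Zq - xbar q)‖
        ≤ L * C1 ^ 2 * ε ^ 2 := by
      refine (taylor _ hZD _ (hmemD q hq)).trans ?_
      have h2 : ‖Zq - xbar q‖ ^ 2 ≤ (ε * C1) ^ 2 :=
        pow_le_pow_left₀ (norm_nonneg _) hρ 2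
      nlinarith
    have hr2 : ‖w Zq (q + σ) - w (xbar q) (q + σ)‖ ≤ Kw * (ε * C1) := by
      have h3 := (hwLip (q + σ)).dist_le_mul Zq (xbar q)
      rw [dist_eq_norm, dist_eq_norm] at h3
      exact h3.trans (mul_le_mul_of_nonneg_left hρ Kw.coe_nonneg)
    have hRn : ‖(u Zq - u (xbar q) - (fderiv ℝ u (xbar q)) (Zq - xbar q))
        + ε • (w Zq (q + σ) - w (xbar q) (q + σ))‖
        ≤ (L * C1 ^ 2 + Kw * C1) * ε ^ 2 := by
      refine (norm_add_le _ _).trans ?_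
      rw [norm_smul, Real.norm_eq_abs, abs_of_pos hε0]
      have h4 : ε * ‖w Zq (q + σ) - w (xbar q) (q + σ)‖ ≤ ε * (Kw * (ε * C1)) :=
        mul_le_mul_of_nonneg_left hr2 (le_of_lt hε0)
      nlinarith
    have hinner : |⟪vJ q, (u Zq - u (xbar q) - (fderiv ℝ u (xbar q)) (Zq - xbar q))
        + ε • (w Zq (q + σ) - w (xbar q) (q + σ))⟫_ℝ|
        ≤ Bu * ((L * C1 ^ 2 + Kw * C1) * ε ^ 2) := by
      refine (abs_real_inner_le_norm _ _).trans ?_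
      rw [hvJnorm q]
      exact mul_le_mul (hBu q hq) hRn (norm_nonneg _) hBu0
    rw [abs_mul, abs_of_pos (Real.exp_pos _)]
    calc Real.exp (-β q) * |⟪vJ q, _⟫_ℝ|
        ≤ eB * (Bu * ((L * C1 ^ 2 + Kw * C1) * ε ^ 2)) :=
          mul_le_mul (hexpβ q hq).1 hinner (abs_nonneg _) heB0
      _ = C5 * ε ^ 2 := by rw [hC5_def]; ring
  have hgXbd : ∀ q ∈ Set.Icc pu p, ‖Real.exp (-β q) * ⟪vJ q, RX q⟫_ℝ‖ ≤ C5 * ε ^ 2 := by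
    intro q hq
    rw [Real.norm_eq_abs]
    exact hRbound q (Xt q) ⟨hq.1, le_trans hq.2 (le_of_lt hpd)⟩ (hXD q hq) (hρX q hq)
  have hgYbd : ∀ q ∈ Set.Icc p pd, ‖Real.exp (-β q) * ⟪vJ q, RY q⟫_ℝ‖ ≤ C5 * ε ^ 2 := by
    intro q hq
    rw [Real.norm_eq_abs]
    exact hRbound q (Yt q) ⟨le_trans (le_of_lt hpu) hq.1, hq.2⟩ (hYD q hq) (hρY q hq)
  -- mean value estimates
  have hgXdiff : |gX p - gX pu| ≤ C5 * ε ^ 2 * (p - pu) := by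
    have h := (convex_Icc pu p).norm_image_sub_le_of_norm_hasDerivWithin_le
      (f := gX) (f' := fun q => Real.exp (-β q) * ⟪vJ q, RX q⟫_ℝ) (C := C5 * ε ^ 2)
      (fun q hq => (hgX' q).hasDerivWithinAt) hgXbd
      (Set.left_mem_Icc.2 (le_of_lt hpu)) (Set.right_mem_Icc.2 (le_of_lt hpu))
    rw [Real.norm_eq_abs, Real.norm_eq_abs, abs_of_nonneg (by linarith : (0:ℝ) ≤ p - pu)] at h
    exact h
  have hgYdiff : |gY p - gY pd| ≤ C5 * ε ^ 2 * (pd - p) := by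
    have h := (convex_Icc p pd).norm_image_sub_le_of_norm_hasDerivWithin_le
      (f := gY) (f' := fun q => Real.exp (-β q) * ⟪vJ q, RY q⟫_ℝ) (C := C5 * ε ^ 2)
      (fun q hq => (hgY' q).hasDerivWithinAt) hgYbd
      (Set.right_mem_Icc.2 (le_of_lt hpd)) (Set.left_mem_Icc.2 (le_of_lt hpd))
    rw [Real.norm_eq_abs, Real.norm_eq_abs] at h
    refine h.trans (le_of_eq ?_)
    rw [abs_of_nonpos (by linarith : p - pd ≤ 0)]
    ring
  -- endpoint values
  have hβpu : β pu = 0 := intervalIntegral.integral_same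
  have hWpu : W pu = 0 := intervalIntegral.integral_same
  have hgXpu : gX pu = 0 := by
    rw [hgX_def]
    simp only [hβpu, hWpu, hXf_def, hX0', sub_self, inner_zero_right]
    ring
  have hgYpd : gY pd = -(ε * W pd) := by
    rw [hgY_def]
    simp only [hYf_def, hY0', sub_self, inner_zero_right]
    ring
  -- the Melnikov function in terms of W
  have hMflux : Mflux u xbar w pu pd ε p t = ε * (Real.exp (β p) * W pd) := by
    rw [Mflux, hW_def]
    simp only []
    congr 1
    rw [← intervalIntegral.integral_const_mul]
    apply intervalIntegral.integral_congr
    intro τ hτ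
    show Real.exp (∫ ξ in τ..p, div2 u (xbar ξ))
        * ⟪Jrot (u (xbar τ)), w (xbar τ) (τ + t - p)⟫_ℝ = Real.exp (β p) * G τ
    have hsub : (∫ ξ in τ..p, div2 u (xbar ξ)) = β p - β τ := by
      rw [hβ_def]
      simp only []
      rw [intervalIntegral.integral_interval_sub_left (hdivx.intervalIntegrable _ _)
        (hdivx.intervalIntegrable _ _)]
    rw [hsub, hG_def]
    simp only [hvJ_def, JL_eq]
    rw [Real.exp_sub, Real.exp_neg, div_eq_mul_inv, hσ_def,
      show τ + t - p = τ + (t - p) by ring]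
    ring
  -- central difference estimate
  have hexpβp : Real.exp (β p) ≤ eB :=
    (hexpβ p ⟨le_of_lt hpu, le_of_lt hpd⟩).2
  have hXfp : hXf p = Real.exp (β p) * (gX p + ε * W p) := by
    have h1 : Real.exp (-β p) * hXf p = gX p + ε * W p := by
      rw [hgX_def]; ring
    have h2 := congrArg (fun z => Real.exp (β p) * z) h1
    rw [← mul_assoc, ← Real.exp_add] at h2
    simpa using h2
  have hYfp : hYf p = Real.exp (β p) * (gY p + ε * W p) := by
    have h1 : Real.exp (-β p) * hYf p = gY p + ε * W p := by
      rw [hgY_def]; ring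
    have h2 := congrArg (fun z => Real.exp (β p) * z) h1
    rw [← mul_assoc, ← Real.exp_add] at h2
    simpa using h2
  have hcenter : |⟪vJ p, Xt p - Yt p⟫_ℝ - Mflux u xbar w pu pd ε p t| ≤ C7 * ε ^ 2 := by
    have hdiff : ⟪vJ p, Xt p - Yt p⟫_ℝ = hXf p - hYf p := by
      rw [hXf_def, hYf_def]
      simp only []
      rw [← inner_sub_right]
      congr 1
      abel
    have heq : ⟪vJ p, Xt p - Yt p⟫_ℝ - Mflux u xbar w pu pd ε p t
        = Real.exp (β p) * ((gX p - gX pu) - (gY p - gY pd)) := by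
      rw [hdiff, hXfp, hYfp, hMflux, hgXpu, hgYpd]
      ring
    rw [heq, abs_mul, abs_of_pos (Real.exp_pos _)]
    have habs : |(gX p - gX pu) - (gY p - gY pd)|
        ≤ C5 * ε ^ 2 * (p - pu) + C5 * ε ^ 2 * (pd - p) :=
      (abs_sub _ _).trans (add_le_add hgXdiff hgYdiff)
    calc Real.exp (β p) * |(gX p - gX pu) - (gY p - gY pd)|
        ≤ eB * (C5 * ε ^ 2 * (p - pu) + C5 * ε ^ 2 * (pd - p)) :=
          mul_le_mul hexpβp habs (abs_nonneg _) heB0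
      _ = C7 * ε ^ 2 := by rw [hC7_def, hdd_def]; ring
  -- the gate flux
  have hXtp : X t = Xt p := by
    rw [hXt_def]; simp only []; congr 1; rw [hσ_def]; ring
  have hYtp : Y t = Yt p := by
    rw [hYt_def]; simp only []; congr 1; rw [hσ_def]; ring
  set u0 : E2 := u (xbar p) with hu0_def
  have hn0 : (0:ℝ) < ‖u0‖ := norm_pos_iff.2 (hune p)
  have hn0' : ‖u0‖ ≠ 0 := ne_of_gt hn0
  set Dv : E2 := X t - Y t with hDv_def
  have hDvp : Dv = Xt p - Yt p := by rw [hDv_def, hXtp, hYtp]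
  have hDvn : ‖Dv‖ ≤ 2 * (ε * C1) := by
    rw [hDvp]
    calc ‖Xt p - Yt p‖ ≤ ‖Xt p - xbar p‖ + ‖xbar p - Yt p‖ := by
          rw [show Xt p - Yt p = (Xt p - xbar p) + (xbar p - Yt p) by abel]
          exact norm_add_le _ _
      _ ≤ ε * C1 + ε * C1 := add_le_add (hρX p ⟨le_of_lt hpu, le_rfl⟩)
          (by rw [norm_sub_rev]; exact hρY p ⟨le_rfl, le_of_lt hpd⟩)
      _ = 2 * (ε * C1) := by ring
  set F : ℝ → ℝ := fun s => ⟪u (Y t + s • Dv) + ε • w (Y t + s • Dv) t, u0⟫_ℝ with hF_def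
  have hγc : Continuous fun s : ℝ => Y t + s • Dv :=
    continuous_const.add (continuous_id.smul continuous_const)
  have hFc : Continuous F :=
    ((hu_cont.comp hγc).add
      (((hw_cont.comp (hγc.prodMk continuous_const))).const_smul ε)).inner continuous_const
  set Ihat : ℝ := ∫ s in (0:ℝ)..1, F s with hIhat_def
  have hγD : ∀ s ∈ Set.Icc (0:ℝ) 1, ‖(Y t + s • Dv) - xbar p‖ ≤ ε * C1 := by
    intro s hs
    have heq3 : (Y t + s • Dv) - xbar p
        = (1 - s) • (Yt p - xbar p) + s • (Xt p - xbar p) := by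
      rw [hDvp, hYtp]; module
    rw [heq3]
    have hY' := hρY p ⟨le_rfl, le_of_lt hpd⟩
    have hX' := hρX p ⟨le_of_lt hpu, le_rfl⟩
    calc ‖(1 - s) • (Yt p - xbar p) + s • (Xt p - xbar p)‖
        ≤ ‖(1 - s) • (Yt p - xbar p)‖ + ‖s • (Xt p - xbar p)‖ := norm_add_le _ _
      _ = (1 - s) * ‖Yt p - xbar p‖ + s * ‖Xt p - xbar p‖ := by
          rw [norm_smul, norm_smul, Real.norm_eq_abs, Real.norm_eq_abs,
            abs_of_nonneg (by linarith [hs.2] : (0:ℝ) ≤ 1 - s), abs_of_nonneg hs.1]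
      _ ≤ (1 - s) * (ε * C1) + s * (ε * C1) :=
          add_le_add (mul_le_mul_of_nonneg_left hY' (by linarith [hs.2]))
            (mul_le_mul_of_nonneg_left hX' hs.1)
      _ = ε * C1 := by ring
  have hgate : gateFlux u w xbar ε p t (X t) (Y t)
      = (‖u0‖⁻¹ * ⟪vJ p, Dv⟫_ℝ) * (‖u0‖⁻¹ * Ihat) := by
    rw [gateFlux, hIhat_def]
    rw [← hDv_def]
    have hJ : Jrot (u (xbar p)) = vJ p := rfl
    rw [real_inner_smul_right, hJ, real_inner_comm]
    congr 1
    simp only [real_inner_smul_right]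
    rw [intervalIntegral.integral_const_mul]
  have hIc : |Ihat - ‖u0‖ ^ 2| ≤ C6 * ε * ‖u0‖ := by
    have hint : IntervalIntegrable F MeasureTheory.volume 0 1 := hFc.intervalIntegrable _ _
    have hconst : (∫ _ in (0:ℝ)..1, ⟪u0, u0⟫_ℝ) = ‖u0‖ ^ 2 := by
      rw [intervalIntegral.integral_const]
      simp only [sub_zero, one_smul]
      exact real_inner_self_eq_norm_sq u0
    have heq2 : Ihat - ‖u0‖ ^ 2 = ∫ s in (0:ℝ)..1, (F s - ⟪u0, u0⟫_ℝ) := by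
      rw [intervalIntegral.integral_sub hint (intervalIntegrable_const), hconst, hIhat_def]
    rw [heq2]
    have hb : ∀ s ∈ Set.uIoc (0:ℝ) 1, ‖F s - ⟪u0, u0⟫_ℝ‖ ≤ C6 * ε * ‖u0‖ := by
      intro s hs
      rw [Set.uIoc_of_le (by norm_num : (0:ℝ) ≤ 1)] at hs
      have hs' : s ∈ Set.Icc (0:ℝ) 1 := ⟨le_of_lt hs.1, hs.2⟩
      have heq4 : F s - ⟪u0, u0⟫_ℝ
          = ⟪(u (Y t + s • Dv) + ε • w (Y t + s • Dv) t) - u0, u0⟫_ℝ := by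
        rw [inner_sub_left]
      rw [heq4, Real.norm_eq_abs]
      refine (abs_real_inner_le_norm _ _).trans ?_
      have hz : ‖(u (Y t + s • Dv) + ε • w (Y t + s • Dv) t) - u0‖ ≤ C6 * ε := by
        have h5 : ‖u (Y t + s • Dv) - u0‖ ≤ K * (ε * C1) := by
          have h6 := huLip.dist_le_mul (Y t + s • Dv) (xbar p)
          rw [dist_eq_norm, dist_eq_norm] at h6
          exact h6.trans (mul_le_mul_of_nonneg_left (hγD s hs') K.coe_nonneg)
        have h7 : ‖ε • w (Y t + s • Dv) t‖ ≤ ε * Cw := by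
          rw [norm_smul, Real.norm_eq_abs, abs_of_pos hε0]
          exact mul_le_mul_of_nonneg_left (hwbdd _ _) (le_of_lt hε0)
        calc ‖(u (Y t + s • Dv) + ε • w (Y t + s • Dv) t) - u0‖
            ≤ ‖u (Y t + s • Dv) - u0‖ + ‖ε • w (Y t + s • Dv) t‖ := by
              rw [show (u (Y t + s • Dv) + ε • w (Y t + s • Dv) t) - u0
                = (u (Y t + s • Dv) - u0) + ε • w (Y t + s • Dv) t by abel]
              exact norm_add_le _ _
          _ ≤ K * (ε * C1) + ε * Cw := add_le_add h5 h7
          _ = C6 * ε := by rw [hC6_def]; ring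
      have hεC1' : 0 ≤ ε * C1 := by positivity
      exact mul_le_mul_of_nonneg_right hz (norm_nonneg _)
    have h8 := intervalIntegral.norm_integral_le_of_norm_le_const hb
    rw [Real.norm_eq_abs] at h8
    simpa using h8
  -- final assembly
  have hip : |⟪vJ p, Dv⟫_ℝ| ≤ ‖u0‖ * (2 * (ε * C1)) := by
    refine (abs_real_inner_le_norm _ _).trans ?_
    rw [hvJnorm p]
    exact mul_le_mul_of_nonneg_left hDvn (norm_nonneg _)
  rw [← hDvp] at hcenter
  have hsplit : gateFlux u w xbar ε p t (X t) (Y t) - Mflux u xbar w pu pd ε p t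
      = (‖u0‖⁻¹ * ⟪vJ p, Dv⟫_ℝ) * (‖u0‖⁻¹ * (Ihat - ‖u0‖ ^ 2))
        + (⟪vJ p, Dv⟫_ℝ - Mflux u xbar w pu pd ε p t) := by
    rw [hgate]
    field_simp
    ring
  rw [hsplit]
  refine (abs_add_le _ _).trans ?_
  have h1 : |(‖u0‖⁻¹ * ⟪vJ p, Dv⟫_ℝ) * (‖u0‖⁻¹ * (Ihat - ‖u0‖ ^ 2))|
      ≤ 2 * C1 * C6 * ε ^ 2 := by
    rw [abs_mul, abs_mul, abs_mul, abs_of_nonneg (inv_nonneg.2 (norm_nonneg u0))]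
    have h2 : ‖u0‖⁻¹ * |⟪vJ p, Dv⟫_ℝ| ≤ ‖u0‖⁻¹ * (‖u0‖ * (2 * (ε * C1))) :=
      mul_le_mul_of_nonneg_left hip (inv_nonneg.2 (norm_nonneg u0))
    have h3 : ‖u0‖⁻¹ * |Ihat - ‖u0‖ ^ 2| ≤ ‖u0‖⁻¹ * (C6 * ε * ‖u0‖) :=
      mul_le_mul_of_nonneg_left hIc (inv_nonneg.2 (norm_nonneg u0))
    calc ‖u0‖⁻¹ * |⟪vJ p, Dv⟫_ℝ| * (‖u0‖⁻¹ * |Ihat - ‖u0‖ ^ 2|)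
        ≤ (‖u0‖⁻¹ * (‖u0‖ * (2 * (ε * C1)))) * (‖u0‖⁻¹ * (C6 * ε * ‖u0‖)) := by
          apply mul_le_mul h2 h3 (by positivity) (by positivity)
      _ = 2 * C1 * C6 * ε ^ 2 := by field_simp
  have hsq : (0:ℝ) ≤ ε ^ 2 := sq_nonneg _
  calc |(‖u0‖⁻¹ * ⟪vJ p, Dv⟫_ℝ) * (‖u0‖⁻¹ * (Ihat - ‖u0‖ ^ 2))|
        + |⟪vJ p, Dv⟫_ℝ - Mflux u xbar w pu pd ε p t|
      ≤ 2 * C1 * C6 * ε ^ 2 + C7 * ε ^ 2 := add_le_add h1 hcenter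
    _ = (2 * C1 * C6 + C7) * ε ^ 2 := by ring
    _ ≤ (2 * C1 * C6 + C7 + 1) * ε ^ 2 :=
        mul_le_mul_of_nonneg_right (by linarith) hsq
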